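/- Quantum Packing Lemma (Lemma 1 of the paper): Let 𝒳 be a finite set, p a probability mass function on 𝒳, and {ρ_x}_{x∈𝒳} a family of d×d complex density matrices with average state ρ = ∑_{x∈𝒳} p(x)·ρ_x. Suppose there exist d×d complex matrices Π and Π_x (x ∈ 𝒳), each satisfying 0 ≤ Π ≤ I and 0 ≤ Π_x ≤ I, and constants ε ∈ (0,1) and real numbers 0 < h < H, such that for all x ∈ 𝒳: (i) Re tr(Π ρ_x) ≥ 1 − ε; (ii) Re tr(Π_x ρ_x) ≥ 1 − ε; (iii) Re tr(Π_x) ≤ 2^h; and (iv) Π ρ Π ≤ 2^{−H} Π in the Loewner order. Then for every positive integer M there exists, for each codebook c : {1,…,M} → 𝒳, a POVM {Λ^c_m}_{m=1,…,M} (each Λ^c_m positive semidefinite with ∑_{m=1}^M Λ^c_m ≤ I in the Loewner order) such that the expected average error probability over a codebook with M codewords drawn i.i.d. according to p satisfies ∑_{c : {1,…,M} → 𝒳} (∏_{m=1}^M p(c(m))) · (1 − (1/M) ∑_{m=1}^M Re tr(Λ^c_m · ρ_{c(m)})) ≤ 2(ε + 2√ε) + 4·M·2^{−(H−h)}. -/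

import Mathlib

open Matrix ComplexOrder

namespace QPL
variable {d : ℕ}

abbrev Mat (d : ℕ) := Matrix (Fin d) (Fin d) ℂ

end QPL

open scoped MatrixOrder in
noncomputable def Matrix.PosSemidef.sqrt {d : ℕ} {A : Matrix (Fin d) (Fin d) ℂ}
    (_ : A.PosSemidef) : Matrix (Fin d) (Fin d) ℂ := CFC.sqrt A

open scoped MatrixOrder in
lemma Matrix.PosSemidef.sqrt_mul_self {d : ℕ} {A : Matrix (Fin d) (Fin d) ℂ}
    (hA : A.PosSemidef) : hA.sqrt * hA.sqrt = A := CFC.sqrt_mul_sqrt_self A hA.nonneg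

open scoped MatrixOrder in
lemma Matrix.PosSemidef.posSemidef_sqrt {d : ℕ} {A : Matrix (Fin d) (Fin d) ℂ}
    (hA : A.PosSemidef) : hA.sqrt.PosSemidef := (CFC.sqrt_nonneg A).posSemidef

namespace QPL
variable {d : ℕ}

lemma psd_smul {A : Mat d} (hA : A.PosSemidef) {r : ℝ} (hr : 0 ≤ r) :
    ((r : ℂ) • A).PosSemidef := by
  refine PosSemidef.of_dotProduct_mulVec_nonneg ?_ ?_
  · unfold Matrix.IsHermitian
    rw [conjTranspose_smul, hA.1.eq]
    congr 1
    simp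
  · intro x
    rw [smul_mulVec, dotProduct_smul]
    exact smul_nonneg (by exact_mod_cast hr) (hA.dotProduct_mulVec_nonneg x)

lemma re_trace_nonneg {A : Mat d} (hA : A.PosSemidef) : 0 ≤ A.trace.re := by
  have h : ∀ i, 0 ≤ A i i := by
    intro i
    have := hA.dotProduct_mulVec_nonneg (Pi.single i 1)
    simpa [dotProduct, mulVec, Pi.single_apply, Finset.sum_ite_eq] using this
  rw [Matrix.trace, Complex.re_sum]
  exact Finset.sum_nonneg fun i _ => ((Complex.le_def.mp (h i)).1 : _)

lemma re_trace_mul_nonneg {A B : Mat d} (hA : A.PosSemidef) (hB : B.PosSemidef) :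
    0 ≤ ((A * B).trace).re := by
  have hs := hA.sqrt_mul_self
  have h1 : A * B = hA.sqrt * (hA.sqrt * B) := by rw [← mul_assoc, hs]
  have h2 : (A * B).trace = (hA.sqrt * B * hA.sqrt).trace := by
    rw [h1, trace_mul_comm, mul_assoc]
  rw [h2]
  have h3 : (hA.sqrt * B * hA.sqrt).PosSemidef := by
    have := hB.mul_mul_conjTranspose_same hA.sqrt
    rwa [hA.posSemidef_sqrt.1.eq] at this
  exact re_trace_nonneg h3

/-- Trace monotonicity against a PSD matrix. -/
lemma re_trace_mono {A B ρ : Mat d} (hAB : (B - A).PosSemidef) (hρ : ρ.PosSemidef) :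
    ((A * ρ).trace).re ≤ ((B * ρ).trace).re := by
  have := re_trace_mul_nonneg hAB hρ
  rw [sub_mul, trace_sub, Complex.sub_re] at this
  linarith



variable {d : ℕ}

/-- conjugation by a Hermitian matrix preserves PSD -/
lemma conj_psd {A : Mat d} (hA : A.PosSemidef) {R : Mat d} (hR : R.IsHermitian) :
    (R * A * R).PosSemidef := by
  have := hA.mul_mul_conjTranspose_same R
  rwa [hR.eq] at this

/-- `0 ≤ X ≤ 1` implies `X² ≤ X`. -/
lemma sq_aux (s X : Mat d) (hs : s * s = X) : s * (1 - X) * s = X - X * X := by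
  subst hs; noncomm_ring

lemma sq_le_self {X : Mat d} (h0 : X.PosSemidef) (h1 : (1 - X).PosSemidef) :
    (X - X * X).PosSemidef := by
  rw [← sq_aux h0.sqrt X h0.sqrt_mul_self]
  exact conj_psd h1 h0.posSemidef_sqrt.1

/-- a PSD matrix whose square is PosDef is PosDef -/
lemma posDef_of_sq {A : Mat d} (hA : A.PosSemidef) (hsq : (A * A).PosDef) : A.PosDef := by
  refine PosDef.of_dotProduct_mulVec_pos hA.1 fun x hx => ?_
  rcases lt_or_eq_of_le (hA.dotProduct_mulVec_nonneg x) with h | h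
  · exact h
  · exfalso
    have hAx : A *ᵥ x = 0 := (hA.dotProduct_mulVec_zero_iff x).mp h.symm
    have := hsq.dotProduct_mulVec_pos hx
    rw [← mulVec_mulVec, hAx, mulVec_zero, dotProduct_zero] at this
    exact lt_irrefl _ this

/-- Hermitian with nonpositive eigenvalues: negation is PSD. -/
lemma neg_psd_of_eigenvalues_nonpos {C : Mat d} (hC : C.IsHermitian)
    (h : ∀ i, hC.eigenvalues i ≤ 0) : (-C).PosSemidef := by
  have hst := hC.spectral_theorem
  have : -C = (hC.eigenvectorUnitary : Mat d) *
      (Matrix.diagonal (fun i => (↑(-(hC.eigenvalues i)) : ℂ))) *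
      (hC.eigenvectorUnitary : Mat d)ᴴ := by
    rw [show Matrix.diagonal (fun i => (↑(-(hC.eigenvalues i)) : ℂ))
        = -Matrix.diagonal (RCLike.ofReal ∘ hC.eigenvalues) by
      ext i j
      by_cases hij : i = j <;> simp [Matrix.diagonal, hij]]
    rw [mul_neg, neg_mul]
    congr 1
  rw [this]
  refine Matrix.PosSemidef.mul_mul_conjTranspose_same ?_ _
  refine posSemidef_diagonal_iff.mpr fun i => ?_
  rw [show ((↑(-(hC.eigenvalues i)) : ℂ)) = ((-(hC.eigenvalues i) : ℝ) : ℂ) from rfl]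
  rw [Complex.le_def]
  constructor
  · simpa using h i
  · simp



lemma re_dot_comm (x y : Fin d → ℂ) : (star x ⬝ᵥ y).re = (star y ⬝ᵥ x).re := by
  rw [dotProduct, dotProduct, Complex.re_sum, Complex.re_sum]
  refine Finset.sum_congr rfl fun i _ => ?_
  simp [Complex.mul_re]
  ring

lemma dot_sq (B : Mat d) (hB : B.IsHermitian) (v : Fin d → ℂ) :
    star v ⬝ᵥ ((B * B) *ᵥ v) = star (B *ᵥ v) ⬝ᵥ (B *ᵥ v) := by
  rw [star_mulVec, ← dotProduct_mulVec, mulVec_mulVec, hB.eq]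

/-- monotonicity of taking square roots: if `S ≥ 0`, `A > 0` and `S² ≤ A²` then `S ≤ A`. -/
lemma sqrt_mono {S A : Mat d} (hS : S.PosSemidef) (hA : A.PosDef)
    (h : (A * A - S * S).PosSemidef) : (A - S).PosSemidef := by
  have hC : (S - A).IsHermitian := hS.1.sub hA.1
  have key : (-(S - A)).PosSemidef := by
    apply neg_psd_of_eigenvalues_nonpos hC
    intro i
    set t : ℝ := hC.eigenvalues i with ht
    set v : Fin d → ℂ := ⇑(hC.eigenvectorBasis i) with hv
    have hvne : v ≠ 0 := by
      have hne := hC.eigenvectorBasis.orthonormal.ne_zero i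
      intro h0
      apply hne
      ext j
      exact congrFun h0 j
    have hvec : (S - A) *ᵥ v = (t : ℝ) • v := hC.mulVec_eigenvectorBasis i
    have hSv : S *ᵥ v = A *ᵥ v + (t : ℝ) • v := by
      rw [sub_mulVec] at hvec
      linear_combination (norm := module) hvec
    -- real part quantities
    set Av := A *ᵥ v with hAv
    set Sv := S *ᵥ v with hSvdef
    have h1 : (star Sv ⬝ᵥ Sv).re ≤ (star Av ⬝ᵥ Av).re := by
      have h0 := h.dotProduct_mulVec_nonneg v
      rw [sub_mulVec, dotProduct_sub, dot_sq A hA.1 v, dot_sq S hS.1 v] at h0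
      have := (Complex.le_def.mp h0).1
      rw [Complex.sub_re] at this
      simp only [Complex.zero_re] at this
      linarith
    have h2 : 0 ≤ (star (Sv - Av) ⬝ᵥ (Sv - Av)).re := by
      have := dotProduct_star_self_nonneg (Sv - Av)
      exact (Complex.le_def.mp this).1
    have hexp : (star (Sv - Av) ⬝ᵥ (Sv - Av)).re
        = (star Sv ⬝ᵥ Sv).re - (star Sv ⬝ᵥ Av).re - (star Av ⬝ᵥ Sv).re
          + (star Av ⬝ᵥ Av).re := by
      rw [star_sub, sub_dotProduct, dotProduct_sub, dotProduct_sub]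
      simp [Complex.sub_re]
      ring
    have hcomm : (star Av ⬝ᵥ Sv).re = (star Sv ⬝ᵥ Av).re := re_dot_comm Av Sv
    have hβ : 0 < (star v ⬝ᵥ Av).re := by
      have := hA.dotProduct_mulVec_pos hvne
      exact (Complex.lt_def.mp this).1
    have hmix : (star Sv ⬝ᵥ Av).re = (star Av ⬝ᵥ Av).re + t * (star v ⬝ᵥ Av).re := by
      rw [hSv, star_add, add_dotProduct]
      rw [star_smul, smul_dotProduct]
      simp [Complex.add_re, Complex.real_smul]
    nlinarith [h1, h2, hexp, hcomm, hβ, hmix]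
  have : -(S - A) = A - S := by abel
  rwa [this] at key


lemma inv_conj_split {S T A : Mat d} (hApd : A.PosDef) (hAA : A * A = S + T) :
    (1 : Mat d) - A⁻¹ * S * A⁻¹ = A⁻¹ * T * A⁻¹ := by
  have hdet : IsUnit A.det := A.isUnit_iff_isUnit_det.mp hApd.isUnit
  have hQA : A⁻¹ * A = 1 := Matrix.nonsing_inv_mul A hdet
  have hAQ : A * A⁻¹ = 1 := Matrix.mul_nonsing_inv A hdet
  have e1 : A⁻¹ * (A * A) = A := by rw [← mul_assoc, hQA, one_mul]
  have e3 : A⁻¹ * (A * A) * A⁻¹ = 1 := by rw [e1, hAQ]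
  have expand : A⁻¹ * (S + T) * A⁻¹ = A⁻¹ * S * A⁻¹ + A⁻¹ * T * A⁻¹ := by noncomm_ring
  rw [← hAA] at expand
  rw [e3] at expand
  linear_combination (norm := abel) expand

/-- **Hayashi–Nagaoka operator inequality** (invertible case):
if `0 ≤ S ≤ 1`, `T ≥ 0` and `A² = S + T` with `A` positive definite, then
`1 - A⁻¹ S A⁻¹ ≤ 2 (1 - S) + 4 T`. -/
lemma hayashi_nagaoka {S T A : Mat d} (hS : S.PosSemidef) (hS1 : (1 - S).PosSemidef)
    (hT : T.PosSemidef) (hApd : A.PosDef) (hAA : A * A = S + T) :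
    (((1 - S) + (1 - S) + T + T + T + T) - ((1 : Mat d) - A⁻¹ * S * A⁻¹)).PosSemidef := by
  have hdet : IsUnit A.det := A.isUnit_iff_isUnit_det.mp hApd.isUnit
  have hQA : A⁻¹ * A = 1 := Matrix.nonsing_inv_mul A hdet
  have hAQ : A * A⁻¹ = 1 := Matrix.mul_nonsing_inv A hdet
  have hQH : (A⁻¹).IsHermitian := hApd.isHermitian.inv
  set Q := A⁻¹ with hQ
  -- the three PSD pieces
  set P1 : Mat d := ((Q - 1) * T * (Q - 1) + (Q - 1) * T * (Q - 1) + T + T) - Q * T * Q with hP1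
  set P2 : Mat d := (Q - 1) * (A * A) * (Q - 1) - (Q - 1) * T * (Q - 1) with hP2
  set P3 : Mat d := ((1 - S) + T) - (Q - 1) * (A * A) * (Q - 1) with hP3
  have hRH : ((Q - 1) : Mat d).IsHermitian := hQH.sub isHermitian_one
  have hP1psd : P1.PosSemidef := by
    have hid : P1 = ((Q - 1) - 1) * T * ((Q - 1) - 1) := by rw [hP1]; noncomm_ring
    rw [hid]
    exact conj_psd hT (hRH.sub isHermitian_one)
  have hP2psd : P2.PosSemidef := by
    have hid : P2 = (Q - 1) * S * (Q - 1) := by rw [hP2, hAA]; noncomm_ring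
    rw [hid]
    exact conj_psd hS hRH
  have hW3 : ((A - S) : Mat d).PosSemidef := by
    apply sqrt_mono hS hApd
    have hid : A * A - S * S = (S - S * S) + T := by rw [hAA]; abel
    rw [hid]
    exact (sq_le_self hS hS1).add hT
  have hP3psd : P3.PosSemidef := by
    have e1 : Q * (A * A) = A := by rw [← mul_assoc, hQA, one_mul]
    have e2 : (A * A) * Q = A := by rw [mul_assoc, hAQ, mul_one]
    have hR1 : (Q - 1) * (A * A) * (Q - 1) = 1 - A - A + A * A := by
      calc (Q - 1) * (A * A) * (Q - 1)
          = Q * (A * A) * Q - Q * (A * A) - (A * A) * Q + A * A := by noncomm_ring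
        _ = A * Q - A - A + A * A := by rw [e1, e2]
        _ = 1 - A - A + A * A := by rw [hAQ]
    have hid : P3 = (A - S) + (A - S) := by
      rw [hP3, hR1, hAA]; abel
    rw [hid]
    exact hW3.add hW3
  -- assembly
  have hsplit : (1 : Mat d) - Q * S * Q = Q * T * Q := inv_conj_split hApd hAA
  rw [hsplit]
  have hassemble : (((1 - S) + (1 - S) + T + T + T + T) - Q * T * Q)
      = P1 + P2 + P2 + P3 + P3 := by
    rw [hP1, hP2, hP3]; abel
  rw [hassemble]
  exact ((((hP1psd.add hP2psd).add hP2psd).add hP3psd).add hP3psd)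



lemma trace_conj_eq_norm (X : Mat d) :
    ((Xᴴ * X).trace) = (∑ p : Fin d × Fin d, Complex.normSq (X p.1 p.2) : ℝ) := by
  rw [Matrix.trace]
  push_cast
  rw [Fintype.sum_prod_type]
  rw [Finset.sum_comm]
  refine Finset.sum_congr rfl fun i _ => ?_
  rw [Matrix.diag_apply, Matrix.mul_apply]
  refine Finset.sum_congr rfl fun j _ => ?_
  rw [Matrix.conjTranspose_apply]
  rw [Complex.normSq_eq_conj_mul_self]
  rfl

lemma trace_CS (X Y : Mat d) :
    |((Xᴴ * Y).trace).re| ≤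
      Real.sqrt (((Xᴴ * X).trace).re) * Real.sqrt (((Yᴴ * Y).trace).re) := by
  classical
  set u : EuclideanSpace ℂ (Fin d × Fin d) := (WithLp.equiv 2 _).symm (fun p => X p.1 p.2)
  set v : EuclideanSpace ℂ (Fin d × Fin d) := (WithLp.equiv 2 _).symm (fun p => Y p.1 p.2)
  have hinner : (inner ℂ u v : ℂ) = (Xᴴ * Y).trace := by
    rw [PiLp.inner_apply]
    rw [Matrix.trace, Fintype.sum_prod_type, Finset.sum_comm]
    refine Finset.sum_congr rfl fun i _ => ?_
    rw [Matrix.diag_apply, Matrix.mul_apply]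
    refine Finset.sum_congr rfl fun j _ => ?_
    rw [Matrix.conjTranspose_apply]
    rw [RCLike.inner_apply, mul_comm]
    rfl
  have hX : ((Xᴴ * X).trace).re = ‖u‖ ^ 2 := by
    rw [trace_conj_eq_norm, Complex.ofReal_re, EuclideanSpace.norm_eq]
    rw [Real.sq_sqrt]
    · refine Finset.sum_congr rfl fun p _ => ?_
      rw [← Complex.sq_norm]
      rfl
    · positivity
  have hY : ((Yᴴ * Y).trace).re = ‖v‖ ^ 2 := by
    rw [trace_conj_eq_norm, Complex.ofReal_re, EuclideanSpace.norm_eq]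
    rw [Real.sq_sqrt]
    · refine Finset.sum_congr rfl fun p _ => ?_
      rw [← Complex.sq_norm]
      rfl
    · positivity
  have hb : |((Xᴴ * Y).trace).re| ≤ ‖u‖ * ‖v‖ := by
    rw [← hinner]
    calc |(inner ℂ u v : ℂ).re| ≤ ‖(inner ℂ u v : ℂ)‖ := Complex.abs_re_le_norm _
      _ ≤ ‖u‖ * ‖v‖ := norm_inner_le_norm u v
  rw [hX, hY, Real.sqrt_sq (norm_nonneg u), Real.sqrt_sq (norm_nonneg v)]
  exact hb

lemma cs_bound {X Y : Mat d} {a b : ℝ} (hX : ((Xᴴ * X).trace).re ≤ a)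
    (hY : ((Yᴴ * Y).trace).re ≤ b) :
    |((Xᴴ * Y).trace).re| ≤ Real.sqrt a * Real.sqrt b := by
  refine le_trans (trace_CS X Y) ?_
  exact mul_le_mul (Real.sqrt_le_sqrt hX) (Real.sqrt_le_sqrt hY) (Real.sqrt_nonneg _)
    (Real.sqrt_nonneg _)

lemma cs_rho {U V ρ : Mat d} (hρ : ρ.PosSemidef) {a b : ℝ}
    (ha : (((Uᴴ * U) * ρ).trace).re ≤ a) (hb : (((Vᴴ * V) * ρ).trace).re ≤ b) :
    |(((Uᴴ * V) * ρ).trace).re| ≤ Real.sqrt a * Real.sqrt b := by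
  have hs : hρ.sqrt * hρ.sqrt = ρ := hρ.sqrt_mul_self
  set s := hρ.sqrt with hsdef
  have hsH : sᴴ = s := hρ.posSemidef_sqrt.1
  have key : ∀ W₁ W₂ : Mat d, (((W₁ᴴ * W₂) * ρ).trace) = ((W₁ * s)ᴴ * (W₂ * s)).trace := by
    intro W₁ W₂
    rw [conjTranspose_mul, hsH, ← hs]
    rw [show (W₁ᴴ * W₂) * (s * s) = (W₁ᴴ * (W₂ * s)) * s by noncomm_ring,
      trace_mul_comm]
    congr 1
    noncomm_ring
  rw [key U V]
  exact cs_bound (by rw [← key U U]; exact ha) (by rw [← key V V]; exact hb)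

/-- **Gentle operator lemma** combination: `tr(PBPρ) ≥ 1 - ε - 2√ε`. -/
lemma gentle {ρ P B : Mat d} (hρ : ρ.PosSemidef) (hρtr : ρ.trace = 1)
    (hP : P.PosSemidef) (hP1 : (1 - P).PosSemidef)
    (hB : B.PosSemidef) (hB1 : (1 - B).PosSemidef)
    {ε : ℝ} (hε : 0 ≤ ε)
    (hPρ : 1 - ε ≤ ((P * ρ).trace).re) (hBρ : 1 - ε ≤ ((B * ρ).trace).re) :
    1 - ε - 2 * Real.sqrt ε ≤ (((P * B * P) * ρ).trace).re := by
  have hPH : Pᴴ = P := hP.1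
  have hBH : Bᴴ = B := hB.1
  have hPm1H : (P - 1)ᴴ = P - 1 := (hP.1.sub isHermitian_one).eq
  set a : ℝ := (((1 - P) * ρ).trace).re with hadef
  have ha0 : 0 ≤ a := re_trace_mul_nonneg hP1 hρ
  have haval : a = 1 - ((P * ρ).trace).re := by
    rw [hadef, sub_mul, one_mul, trace_sub, Complex.sub_re, hρtr, Complex.one_re]
  have haε : a ≤ ε := by rw [haval]; linarith
  have hsqa : Real.sqrt a ≤ Real.sqrt ε := Real.sqrt_le_sqrt haε
  -- bound for `tr(B² ρ) ≤ 1` and `tr(P² ρ) ≤ 1`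
  have sq_one : ∀ {X : Mat d}, X.PosSemidef → (1 - X).PosSemidef →
      (((X * X) * ρ).trace).re ≤ 1 := by
    intro X h0 h1
    have h2 : ((1 : Mat d) - X * X).PosSemidef := by
      have := h1.add (sq_le_self h0 h1)
      rwa [show (1 - X) + (X - X * X) = 1 - X * X by abel] at this
    have := re_trace_mono h2 hρ
    rwa [one_mul, hρtr, Complex.one_re] at this
  -- bound `tr((1-P)² ρ) ≤ a`
  have sqP : ((((P - 1) * (P - 1)) * ρ).trace).re ≤ a := by
    have h2 : ((1 - P) - (P - 1) * (P - 1)).PosSemidef := by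
      have := sq_le_self hP1 (by rwa [sub_sub_cancel])
      rwa [show (1 - P) - (1 - P) * (1 - P) = (1 - P) - (P - 1) * (P - 1) by noncomm_ring]
        at this
    exact re_trace_mono h2 hρ
  -- term bounds
  have bound2 : |(((Bᴴ * (P - 1)) * ρ).trace).re| ≤ Real.sqrt 1 * Real.sqrt a := by
    refine cs_rho hρ ?_ ?_
    · rw [hBH]; exact sq_one hB hB1
    · rw [hPm1H]; exact sqP
  have bound1 : |((((B * (P - 1))ᴴ * P) * ρ).trace).re| ≤ Real.sqrt a * Real.sqrt 1 := by
    refine cs_rho hρ ?_ ?_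
    · have hid : (B * (P - 1))ᴴ * (B * (P - 1)) = (P - 1) * (B * B) * (P - 1) := by
        rw [conjTranspose_mul, hBH, hPm1H]; noncomm_ring
      rw [hid]
      have hle : ((P - 1) * (P - 1) - (P - 1) * (B * B) * (P - 1)).PosSemidef := by
        have hBB : ((1 : Mat d) - B * B).PosSemidef := by
          have := hB1.add (sq_le_self hB hB1)
          rwa [show (1 - B) + (B - B * B) = 1 - B * B by abel] at this
        have := conj_psd hBB (hP.1.sub isHermitian_one)
        rwa [show (P - 1) * (1 - B * B) * (P - 1)
            = (P - 1) * (P - 1) - (P - 1) * (B * B) * (P - 1) by noncomm_ring] at this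
      calc (((P - 1) * (B * B) * (P - 1)) * ρ).trace.re
          ≤ ((((P - 1) * (P - 1)) * ρ).trace).re := re_trace_mono hle hρ
        _ ≤ a := sqP
    · rw [hPH]; exact sq_one hP hP1
  -- decomposition
  have hc1 : (((P * B * P) * ρ).trace) = ((B * (P * ρ * P)).trace) := by
    rw [show (P * B * P) * ρ = P * ((B * P) * ρ) by noncomm_ring, trace_mul_comm]
    congr 1
    noncomm_ring
  have dec : B * (P * ρ * P) = B * ρ + (B * (P * ρ)) * (P - 1) + (B * (P - 1)) * ρ := by
    noncomm_ring
  have ht1 : (((B * (P * ρ)) * (P - 1)).trace) = ((((B * (P - 1))ᴴ * P) * ρ).trace) := by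
    rw [conjTranspose_mul, hBH, hPm1H, trace_mul_comm]
    congr 1
    noncomm_ring
  have ht2 : (((B * (P - 1)) * ρ).trace) = (((Bᴴ * (P - 1)) * ρ).trace) := by rw [hBH]
  have main : (((P * B * P) * ρ).trace).re
      = ((B * ρ).trace).re + ((((B * (P - 1))ᴴ * P) * ρ).trace).re
        + (((Bᴴ * (P - 1)) * ρ).trace).re := by
    rw [hc1, dec, trace_add, trace_add, Complex.add_re, Complex.add_re, ht1, ht2]
  rw [main]
  rw [Real.sqrt_one] at bound1 bound2
  have b1 := abs_le.mp bound1
  have b2 := abs_le.mp bound2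
  nlinarith [Real.sqrt_nonneg ε]

section Marg
variable {𝒳 : Type} [Fintype 𝒳] [DecidableEq 𝒳]


lemma sum_prod_eval {M : ℕ} (g : Fin M → 𝒳 → ℝ) :
    ∑ c : Fin M → 𝒳, ∏ m, g m (c m) = ∏ m, ∑ x, g m x := (Fintype.prod_sum _).symm

lemma marg_zero (p : 𝒳 → ℝ) (hp1 : ∑ x, p x = 1) (M : ℕ) :
    ∑ c : Fin M → 𝒳, (∏ m, p (c m)) = 1 := by
  rw [sum_prod_eval (fun _ x => p x)]
  simp [hp1]

lemma marg_one (p : 𝒳 → ℝ) (hp1 : ∑ x, p x = 1) {M : ℕ} (m₀ : Fin M) (f : 𝒳 → ℝ) :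
    ∑ c : Fin M → 𝒳, (∏ m, p (c m)) * f (c m₀) = ∑ x, p x * f x := by
  have step1 : ∀ c : Fin M → 𝒳, (∏ m, p (c m)) * f (c m₀)
      = ∏ m, (if m = m₀ then p (c m) * f (c m) else p (c m)) := by
    intro c
    rw [← Finset.mul_prod_erase Finset.univ
      (fun m => if m = m₀ then p (c m) * f (c m) else p (c m)) (Finset.mem_univ m₀),
      ← Finset.mul_prod_erase Finset.univ (fun m => p (c m)) (Finset.mem_univ m₀)]
    rw [Finset.prod_congr rfl (fun m hm => if_neg (Finset.ne_of_mem_erase hm))]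
    simp only [if_true, eq_self_iff_true]
    ring
  rw [Finset.sum_congr rfl (fun c _ => step1 c)]
  rw [sum_prod_eval (fun m x => if m = m₀ then p x * f x else p x)]
  rw [← Finset.mul_prod_erase Finset.univ
    (fun m => ∑ x, if m = m₀ then p x * f x else p x) (Finset.mem_univ m₀)]
  have h2 : ∀ m ∈ Finset.univ.erase m₀,
      (∑ x, if m = m₀ then p x * f x else p x) = 1 := by
    intro m hm
    rw [Finset.sum_congr rfl (fun x _ => if_neg (Finset.ne_of_mem_erase hm))]
    exact hp1
  rw [Finset.prod_congr rfl h2]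
  simp only [if_true, eq_self_iff_true, Finset.prod_const_one, mul_one]

lemma marg_pair (p : 𝒳 → ℝ) (hp1 : ∑ x, p x = 1) {M : ℕ} {m₀ m₁ : Fin M}
    (hne : m₀ ≠ m₁) (G : 𝒳 → 𝒳 → ℝ) :
    ∑ c : Fin M → 𝒳, (∏ m, p (c m)) * G (c m₀) (c m₁)
      = ∑ x, ∑ y, p x * p y * G x y := by
  have expand : ∀ c : Fin M → 𝒳, (∏ m, p (c m)) * G (c m₀) (c m₁)
      = ∑ x, ∑ y, (if x = c m₀ then 1 else 0) * ((if y = c m₁ then 1 else 0)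
          * ((∏ m, p (c m)) * G x y)) := by
    intro c
    have inner : ∀ x : 𝒳, (∑ y, (if x = c m₀ then 1 else 0) * ((if y = c m₁ then 1 else 0)
        * ((∏ m, p (c m)) * G x y)))
        = (if x = c m₀ then 1 else 0) * ((∏ m, p (c m)) * G x (c m₁)) := by
      intro x
      rw [Finset.sum_eq_single (c m₁) (fun b _ hb => by simp [hb])
        (fun h => absurd (Finset.mem_univ _) h)]
      simp
    rw [Finset.sum_congr rfl (fun x _ => inner x)]
    rw [Finset.sum_eq_single (c m₀) (fun b _ hb => by simp [hb])
      (fun h => absurd (Finset.mem_univ _) h)]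
    simp
  rw [Finset.sum_congr rfl (fun c _ => expand c), Finset.sum_comm]
  refine Finset.sum_congr rfl fun x _ => ?_
  rw [Finset.sum_comm]
  refine Finset.sum_congr rfl fun y _ => ?_
  have key : ∑ c : Fin M → 𝒳, (if x = c m₀ then 1 else 0) * ((if y = c m₁ then 1 else 0)
      * (∏ m, p (c m)))
      = p x * p y := by
    have hm₁ : m₁ ∈ Finset.univ.erase m₀ :=
      Finset.mem_erase.mpr ⟨hne.symm, Finset.mem_univ m₁⟩
    have step : ∀ c : Fin M → 𝒳, (if x = c m₀ then 1 else 0) * ((if y = c m₁ then 1 else 0)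
        * (∏ m, p (c m)))
        = ∏ m, (if m = m₀ then (if x = c m then p (c m) else 0)
            else if m = m₁ then (if y = c m then p (c m) else 0) else p (c m)) := by
      intro c
      rw [← Finset.mul_prod_erase Finset.univ
        (fun m => if m = m₀ then (if x = c m then p (c m) else 0)
            else if m = m₁ then (if y = c m then p (c m) else 0) else p (c m))
        (Finset.mem_univ m₀),
        ← Finset.mul_prod_erase _ _ hm₁,
        ← Finset.mul_prod_erase Finset.univ (fun m => p (c m)) (Finset.mem_univ m₀),
        ← Finset.mul_prod_erase _ (fun m => p (c m)) hm₁]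
      rw [Finset.prod_congr rfl (fun m hm => ?_)]
      · simp only [if_pos rfl, if_neg (Finset.ne_of_mem_erase hm₁)]
        split_ifs <;> ring
      · rw [if_neg (Finset.ne_of_mem_erase (Finset.mem_of_mem_erase hm)),
          if_neg (Finset.ne_of_mem_erase hm)]
    rw [Finset.sum_congr rfl (fun c _ => step c)]
    rw [sum_prod_eval (fun m z => if m = m₀ then (if x = z then p z else 0)
        else if m = m₁ then (if y = z then p z else 0) else p z)]
    rw [← Finset.mul_prod_erase Finset.univ _ (Finset.mem_univ m₀),
      ← Finset.mul_prod_erase _ _ hm₁]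
    have h3 : ∀ m ∈ (Finset.univ.erase m₀).erase m₁,
        (∑ z, if m = m₀ then (if x = z then p z else 0)
            else if m = m₁ then (if y = z then p z else 0) else p z) = 1 := by
      intro m hm
      rw [Finset.sum_congr rfl (fun z _ => ?_)]
      · exact hp1
      · rw [if_neg (Finset.ne_of_mem_erase (Finset.mem_of_mem_erase hm)),
          if_neg (Finset.ne_of_mem_erase hm)]
    rw [Finset.prod_congr rfl h3]
    have h4 : (∑ z, if m₀ = m₀ then (if x = z then p z else 0)
        else if m₀ = m₁ then (if y = z then p z else 0) else p z) = p x := by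
      simp [Finset.sum_ite_eq]
    have h5 : (∑ z, if m₁ = m₀ then (if x = z then p z else 0)
        else if m₁ = m₁ then (if y = z then p z else 0) else p z) = p y := by
      simp [hne.symm, Finset.sum_ite_eq]
    rw [h4, h5, Finset.prod_const_one]
    ring
  calc ∑ c : Fin M → 𝒳, (if x = c m₀ then 1 else 0) * ((if y = c m₁ then 1 else 0)
        * ((∏ m, p (c m)) * G x y))
      = (∑ c : Fin M → 𝒳, (if x = c m₀ then 1 else 0) * ((if y = c m₁ then 1 else 0)
        * (∏ m, p (c m)))) * G x y := by
        rw [Finset.sum_mul]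
        refine Finset.sum_congr rfl fun c _ => by ring
    _ = p x * p y * G x y := by rw [key]

end Marg

variable {d : ℕ}

lemma psd_sum {ι : Type*} (s : Finset ι) (f : ι → Mat d)
    (h : ∀ i ∈ s, (f i).PosSemidef) : (∑ i ∈ s, f i).PosSemidef :=
  Finset.sum_induction f _ (fun _ _ ha hb => ha.add hb) .zero h

lemma posDef_smul_one {κ : ℝ} (hκ : 0 < κ) : ((κ : ℂ) • (1 : Mat d)).PosDef := by
  refine PosDef.of_dotProduct_mulVec_pos ?_ ?_
  · unfold Matrix.IsHermitian
    rw [conjTranspose_smul, conjTranspose_one]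
    congr 1
    simp
  · intro x hx
    rw [smul_mulVec, one_mulVec, dotProduct_smul]
    have h1 : 0 < star x ⬝ᵥ x := by
      rcases lt_or_eq_of_le (dotProduct_star_self_nonneg x) with h | h
      · exact h
      · exact absurd (dotProduct_star_self_eq_zero.mp h.symm) hx
    have : (0:ℂ) < (κ:ℂ) := by
      rw [Complex.lt_def]; constructor <;> simp [hκ]
    calc (0:ℂ) = (κ:ℂ) • (0:ℂ) := by simp
      _ < (κ:ℂ) • (star x ⬝ᵥ x) := by
          rw [smul_eq_mul, smul_eq_mul]
          exact mul_lt_mul_of_pos_left h1 this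

lemma re_smul_trace {r : ℝ} {M : Mat d} : (((r : ℂ) • M).trace).re = r * M.trace.re := by
  rw [trace_smul, smul_eq_mul]
  simp [Complex.mul_re]

end QPL

open QPL in

/-- **Quantum Packing Lemma.** Given an ensemble `{p x, ρ x}` of density matrices with
average state `ρ̄ = ∑ x, p x • ρ x`, and projector-like operators `Pr`, `Prx x` with
`0 ≤ Pr ≤ 1`, `0 ≤ Prx x ≤ 1` satisfying the packing conditions
`Re tr(Pr ρ_x) ≥ 1 - ε`, `Re tr(Prx x ρ_x) ≥ 1 - ε`, `Re tr(Prx x) ≤ 2^h`, and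
`Pr ρ̄ Pr ≤ 2^(-H) Pr`, then for every codebook size `M` there exists, for each codebook
`c : Fin M → 𝒳`, a POVM `{Λ c m}` whose expected average error probability over an
i.i.d. codebook is at most `2(ε + 2√ε) + 4 M 2^{-(H-h)}`. -/
theorem quantum_packing_lemma {𝒳 : Type} [Fintype 𝒳] [DecidableEq 𝒳] {d : ℕ}
    (p : 𝒳 → ℝ) (hp0 : ∀ x, 0 ≤ p x) (hp1 : ∑ x, p x = 1)
    (ρ : 𝒳 → Matrix (Fin d) (Fin d) ℂ)
    (hρ : ∀ x, (ρ x).PosSemidef) (hρtr : ∀ x, (ρ x).trace = 1)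
    (Pr : Matrix (Fin d) (Fin d) ℂ) (Prx : 𝒳 → Matrix (Fin d) (Fin d) ℂ)
    (hPr : Pr.PosSemidef) (hPr1 : (1 - Pr).PosSemidef)
    (hPrx : ∀ x, (Prx x).PosSemidef) (hPrx1 : ∀ x, (1 - Prx x).PosSemidef)
    (ε : ℝ) (hε0 : 0 < ε) (hε1 : ε < 1)
    (h H : ℝ) (hh : 0 < h) (hhH : h < H)
    (cond1 : ∀ x, 1 - ε ≤ ((Pr * ρ x).trace).re)
    (cond2 : ∀ x, 1 - ε ≤ ((Prx x * ρ x).trace).re)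
    (cond3 : ∀ x, ((Prx x).trace).re ≤ (2 : ℝ) ^ h)
    (cond4 : ((((2 : ℝ) ^ (-H) : ℝ) : ℂ) • Pr
        - Pr * (∑ x, (p x : ℂ) • ρ x) * Pr).PosSemidef)
    (M : ℕ) (hM : 0 < M) :
    ∃ Λ : (Fin M → 𝒳) → Fin M → Matrix (Fin d) (Fin d) ℂ,
      (∀ c m, (Λ c m).PosSemidef) ∧
      (∀ c, (1 - ∑ m, Λ c m).PosSemidef) ∧
      ∑ c : Fin M → 𝒳, (∏ m, p (c m)) *
          (1 - (1 / (M : ℝ)) * ∑ m, ((Λ c m * ρ (c m)).trace).re)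
        ≤ 2 * (ε + 2 * Real.sqrt ε) + 4 * (M : ℝ) * (2 : ℝ) ^ (-(H - h)) := by
  classical
  set κ : ℝ := (2 : ℝ) ^ (-(H - h)) with hκdef
  have hκpos : 0 < κ := Real.rpow_pos_of_pos (by norm_num) _
  set Γ : 𝒳 → Mat d := fun x => Pr * Prx x * Pr with hΓdef
  have hΓpsd : ∀ x, (Γ x).PosSemidef := by
    intro x
    have := (hPrx x).mul_mul_conjTranspose_same Pr
    rwa [hPr.1.eq] at this
  have hΓ1 : ∀ x, ((1 : Mat d) - Γ x).PosSemidef := by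
    intro x
    have h1 : ((1 : Mat d) - Pr * Pr).PosSemidef := by
      have := hPr1.add (sq_le_self hPr hPr1)
      rwa [show (1 - Pr) + (Pr - Pr * Pr) = 1 - Pr * Pr by abel] at this
    have h2 : (Pr * (1 - Prx x) * Pr).PosSemidef := by
      have := (hPrx1 x).mul_mul_conjTranspose_same Pr
      rwa [hPr.1.eq] at this
    have := h1.add h2
    rwa [show (1 - Pr * Pr) + Pr * (1 - Prx x) * Pr = 1 - Γ x by
      rw [hΓdef]; noncomm_ring] at this
  set W : (Fin M → 𝒳) → ℝ := fun c => ∏ m, p (c m) with hWdef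
  have hW0 : ∀ c, 0 ≤ W c := fun c => Finset.prod_nonneg fun m _ => hp0 (c m)
  have hN : ∀ c : Fin M → 𝒳, ((κ : ℂ) • (1 : Mat d) + ∑ m, Γ (c m)).PosDef := by
    intro c
    exact (posDef_smul_one hκpos).add_posSemidef
      (psd_sum _ _ fun m _ => hΓpsd (c m))
  set A : (Fin M → 𝒳) → Mat d := fun c => (hN c).posSemidef.sqrt with hAdef
  have hAA : ∀ c, A c * A c = (κ : ℂ) • (1 : Mat d) + ∑ m, Γ (c m) :=
    fun c => (hN c).posSemidef.sqrt_mul_self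
  have hApd : ∀ c, (A c).PosDef := fun c =>
    posDef_of_sq (hN c).posSemidef.posSemidef_sqrt (by rw [hAA]; exact hN c)
  have hQH : ∀ c, ((A c)⁻¹).IsHermitian := fun c => (hApd c).isHermitian.inv
  refine ⟨fun c m => (A c)⁻¹ * Γ (c m) * (A c)⁻¹,
    fun c m => conj_psd (hΓpsd (c m)) (hQH c), ?_, ?_⟩
  · -- POVM condition
    intro c
    have hsum : ∑ m, (A c)⁻¹ * Γ (c m) * (A c)⁻¹
        = (A c)⁻¹ * (∑ m, Γ (c m)) * (A c)⁻¹ := by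
      rw [Finset.mul_sum, Finset.sum_mul]
    have hsplit := inv_conj_split (hApd c)
      (show A c * A c = (∑ m, Γ (c m)) + (κ : ℂ) • (1 : Mat d) by
        rw [hAA c, add_comm])
    rw [hsum, hsplit]
    have hQQ : ((A c)⁻¹ * (A c)⁻¹).PosSemidef := by
      have := posSemidef_self_mul_conjTranspose (A c)⁻¹
      rwa [(hQH c).eq] at this
    have : (A c)⁻¹ * ((κ : ℂ) • (1 : Mat d)) * (A c)⁻¹
        = (κ : ℂ) • ((A c)⁻¹ * (A c)⁻¹) := by
      rw [mul_smul_comm, smul_mul_assoc, mul_one]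
    rw [this]
    exact psd_smul hQQ hκpos.le
  · -- error bound
    set t : 𝒳 → 𝒳 → ℝ := fun y x => ((Γ y * ρ x).trace).re with htdef
    have hgentle : ∀ x, 1 - ε - 2 * Real.sqrt ε ≤ t x x := fun x =>
      gentle (hρ x) (hρtr x) hPr hPr1 (hPrx x) (hPrx1 x) hε0.le (cond1 x) (cond2 x)
    -- cross term bound
    have hPbar : (∑ x, (p x : ℂ) • Prx x).PosSemidef :=
      psd_sum _ _ fun x _ => psd_smul (hPrx x) (hp0 x)
    set ρb : Mat d := ∑ x, (p x : ℂ) • ρ x with hρbdef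
    have hρb : ρb.PosSemidef := psd_sum _ _ fun x _ => psd_smul (hρ x) (hp0 x)
    have cross : ∑ x, ∑ y, p x * p y * t x y ≤ κ := by
      have stepA : ∀ x, ∑ y, p x * p y * t x y = p x * ((Γ x * ρb).trace).re := by
        intro x
        have : Γ x * ρb = ∑ y, (p y : ℂ) • (Γ x * ρ y) := by
          rw [hρbdef, Finset.mul_sum]
          exact Finset.sum_congr rfl fun y _ => (mul_smul_comm _ _ _)
        rw [this, trace_sum, Complex.re_sum, Finset.mul_sum]
        refine Finset.sum_congr rfl fun y _ => ?_
        rw [re_smul_trace]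
        ring
      rw [Finset.sum_congr rfl fun x _ => stepA x]
      have stepB : ∑ x, p x * ((Γ x * ρb).trace).re
          = (((Pr * (∑ x, (p x : ℂ) • Prx x) * Pr) * ρb).trace).re := by
        have hfact : Pr * (∑ x, (p x : ℂ) • Prx x) * Pr = ∑ x, (p x : ℂ) • Γ x := by
          rw [Finset.mul_sum, Finset.sum_mul]
          refine Finset.sum_congr rfl fun x _ => ?_
          rw [mul_smul_comm, smul_mul_assoc, hΓdef]
        rw [hfact, Finset.sum_mul, trace_sum, Complex.re_sum]
        refine Finset.sum_congr rfl fun x _ => ?_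
        rw [smul_mul_assoc, re_smul_trace]
      rw [stepB]
      have stepC : (((Pr * (∑ x, (p x : ℂ) • Prx x) * Pr) * ρb).trace)
          = (((Pr * ρb * Pr) * (∑ x, (p x : ℂ) • Prx x)).trace) := by
        rw [show (Pr * (∑ x, (p x : ℂ) • Prx x) * Pr) * ρb
            = (Pr * (∑ x, (p x : ℂ) • Prx x)) * (Pr * ρb) by noncomm_ring,
          trace_mul_comm]
        congr 1
        noncomm_ring
      rw [stepC]
      have stepD : (((Pr * ρb * Pr) * (∑ x, (p x : ℂ) • Prx x)).trace).re
          ≤ (((((2 : ℝ) ^ (-H) : ℝ) : ℂ) • Pr) * (∑ x, (p x : ℂ) • Prx x)).trace.re :=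
        re_trace_mono cond4 hPbar
      have stepE : (((((2 : ℝ) ^ (-H) : ℝ) : ℂ) • Pr) * (∑ x, (p x : ℂ) • Prx x)).trace.re
          = ((2 : ℝ) ^ (-H)) * ((Pr * (∑ x, (p x : ℂ) • Prx x)).trace).re := by
        rw [smul_mul_assoc, re_smul_trace]
      have stepF : ((Pr * (∑ x, (p x : ℂ) • Prx x)).trace).re
          ≤ (((1 : Mat d) * (∑ x, (p x : ℂ) • Prx x)).trace).re :=
        re_trace_mono hPr1 hPbar
      have stepG : (((1 : Mat d) * (∑ x, (p x : ℂ) • Prx x)).trace).re ≤ (2 : ℝ) ^ h := by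
        rw [one_mul, trace_sum, Complex.re_sum]
        calc ∑ x, (((p x : ℂ) • Prx x).trace).re
            = ∑ x, p x * ((Prx x).trace).re := by
              exact Finset.sum_congr rfl fun x _ => re_smul_trace
          _ ≤ ∑ x, p x * (2 : ℝ) ^ h :=
              Finset.sum_le_sum fun x _ =>
                mul_le_mul_of_nonneg_left (cond3 x) (hp0 x)
          _ = (2 : ℝ) ^ h := by rw [← Finset.sum_mul, hp1, one_mul]
      have h2H : (0:ℝ) ≤ (2 : ℝ) ^ (-H) := (Real.rpow_pos_of_pos (by norm_num) _).le
      have hfin : ((2 : ℝ) ^ (-H)) * ((2:ℝ) ^ h) = κ := by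
        rw [hκdef, ← Real.rpow_add (by norm_num : (0:ℝ) < 2)]
        congr 1
        ring
      calc (((Pr * ρb * Pr) * (∑ x, (p x : ℂ) • Prx x)).trace).re
          ≤ ((2 : ℝ) ^ (-H)) * ((Pr * (∑ x, (p x : ℂ) • Prx x)).trace).re := by
            rw [← stepE]; exact stepD
        _ ≤ ((2 : ℝ) ^ (-H)) * ((2:ℝ) ^ h) := by
            refine mul_le_mul_of_nonneg_left ?_ h2H
            exact le_trans stepF stepG
        _ = κ := hfin
    -- per-message bound
    have permsg : ∀ (c : Fin M → 𝒳) (m : Fin M),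
        1 - ((((A c)⁻¹ * Γ (c m) * (A c)⁻¹) * ρ (c m)).trace).re
          ≤ 2 * (1 - t (c m) (c m)) + 4 * κ
            + 4 * ∑ m' ∈ Finset.univ.erase m, t (c m') (c m) := by
      intro c m
      set T : Mat d := (∑ m' ∈ Finset.univ.erase m, Γ (c m')) + (κ : ℂ) • (1 : Mat d)
        with hTdef
      have hTpsd : T.PosSemidef :=
        (psd_sum _ _ fun m' _ => hΓpsd (c m')).add
          (psd_smul Matrix.PosSemidef.one hκpos.le)
      have hAA2 : A c * A c = Γ (c m) + T := by
        rw [hAA c, ← Finset.add_sum_erase Finset.univ (fun m => Γ (c m))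
          (Finset.mem_univ m), hTdef]
        abel
      have HN := hayashi_nagaoka (hΓpsd (c m)) (hΓ1 (c m)) hTpsd (hApd c) hAA2
      have tmono := re_trace_mono HN (hρ (c m))
      -- expand left side
      have hL : ((((1 : Mat d) - (A c)⁻¹ * Γ (c m) * (A c)⁻¹) * ρ (c m)).trace).re
          = 1 - ((((A c)⁻¹ * Γ (c m) * (A c)⁻¹) * ρ (c m)).trace).re := by
        rw [sub_mul, one_mul, trace_sub, Complex.sub_re, hρtr, Complex.one_re]
      -- expand right side
      have hT : ((T * ρ (c m)).trace).re
          = (∑ m' ∈ Finset.univ.erase m, t (c m') (c m)) + κ := by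
        rw [hTdef, add_mul, trace_add, Complex.add_re, Finset.sum_mul, trace_sum,
          Complex.re_sum, smul_mul_assoc, one_mul, re_smul_trace, hρtr, Complex.one_re,
          mul_one]
      have hS : (((1 : Mat d) - Γ (c m)) * ρ (c m)).trace.re = 1 - t (c m) (c m) := by
        rw [sub_mul, one_mul, trace_sub, Complex.sub_re, hρtr, Complex.one_re]
      have hR : (((((1 : Mat d) - Γ (c m)) + (1 - Γ (c m)) + T + T + T + T)) * ρ (c m)).trace.re
          = 2 * (1 - t (c m) (c m)) + 4 * ((∑ m' ∈ Finset.univ.erase m, t (c m') (c m)) + κ) := by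
        rw [add_mul, add_mul, add_mul, add_mul, add_mul]
        rw [trace_add, trace_add, trace_add, trace_add, trace_add]
        simp only [Complex.add_re]
        rw [hT, hS]
        ring
      rw [hL] at tmono
      rw [hR] at tmono
      linarith
    -- assemble
    have hM0 : ((M : ℝ)) ≠ 0 := Nat.cast_ne_zero.mpr hM.ne'
    set e1 : ℝ := ε + 2 * Real.sqrt ε with he1
    set g : (Fin M → 𝒳) → Fin M → ℝ := fun c m =>
      2 * (1 - t (c m) (c m)) + 4 * κ
        + 4 * ∑ m' ∈ Finset.univ.erase m, t (c m') (c m) with hgdef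
    have step1 : ∀ c, 1 - (1 / (M : ℝ)) * ∑ m,
        ((((A c)⁻¹ * Γ (c m) * (A c)⁻¹) * ρ (c m)).trace).re
        ≤ (1 / (M : ℝ)) * ∑ m, g c m := by
      intro c
      have expand : 1 - (1 / (M : ℝ)) * ∑ m,
          ((((A c)⁻¹ * Γ (c m) * (A c)⁻¹) * ρ (c m)).trace).re
          = (1 / (M : ℝ)) * ∑ m : Fin M,
            (1 - ((((A c)⁻¹ * Γ (c m) * (A c)⁻¹) * ρ (c m)).trace).re) := by
        rw [Finset.sum_sub_distrib, Finset.sum_const, Finset.card_univ, Fintype.card_fin]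
        field_simp
        simp
      rw [expand]
      refine mul_le_mul_of_nonneg_left ?_ (by positivity)
      exact Finset.sum_le_sum fun m _ => permsg c m
    calc ∑ c : Fin M → 𝒳, W c * (1 - (1 / (M : ℝ)) * ∑ m,
          ((((A c)⁻¹ * Γ (c m) * (A c)⁻¹) * ρ (c m)).trace).re)
        ≤ ∑ c : Fin M → 𝒳, W c * ((1 / (M : ℝ)) * ∑ m, g c m) :=
          Finset.sum_le_sum fun c _ =>
            mul_le_mul_of_nonneg_left (step1 c) (hW0 c)
      _ = ∑ c : Fin M → 𝒳, ∑ m : Fin M, (1 / (M : ℝ)) * (W c * g c m) := by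
          refine Finset.sum_congr rfl fun c _ => ?_
          rw [Finset.mul_sum, Finset.mul_sum]
          exact Finset.sum_congr rfl fun m _ => by ring
      _ = ∑ m : Fin M, ∑ c : Fin M → 𝒳, (1 / (M : ℝ)) * (W c * g c m) :=
          Finset.sum_comm
      _ = (1 / (M : ℝ)) * ∑ m : Fin M, ∑ c : Fin M → 𝒳, W c * g c m := by
          rw [Finset.mul_sum]
          exact Finset.sum_congr rfl fun m _ => by rw [Finset.mul_sum]
      _ ≤ (1 / (M : ℝ)) * ∑ m : Fin M, (2 * e1 + 4 * κ + 4 * (((M:ℝ) - 1) * κ)) := by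
          refine mul_le_mul_of_nonneg_left ?_ (by positivity)
          refine Finset.sum_le_sum fun m _ => ?_
          have hswap : ∑ c : Fin M → 𝒳, ∑ m' ∈ Finset.univ.erase m, W c * t (c m') (c m)
              = ∑ m' ∈ Finset.univ.erase m, ∑ c : Fin M → 𝒳, W c * t (c m') (c m) :=
            Finset.sum_comm
          have hsplit : ∑ c : Fin M → 𝒳, W c * g c m
              = 2 * (∑ c : Fin M → 𝒳, W c * (1 - t (c m) (c m)))
                + 4 * κ * (∑ c : Fin M → 𝒳, W c)
                + 4 * ∑ m' ∈ Finset.univ.erase m,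
                    ∑ c : Fin M → 𝒳, W c * t (c m') (c m) := by
            calc ∑ c : Fin M → 𝒳, W c * g c m
                = ∑ c : Fin M → 𝒳, (2 * (W c * (1 - t (c m) (c m))) + 4 * κ * W c
                  + 4 * ∑ m' ∈ Finset.univ.erase m, W c * t (c m') (c m)) := by
                  refine Finset.sum_congr rfl fun c _ => ?_
                  simp only [hgdef]
                  rw [show W c * (2 * (1 - t (c m) (c m)) + 4 * κ
                      + 4 * ∑ m' ∈ Finset.univ.erase m, t (c m') (c m))
                    = 2 * (W c * (1 - t (c m) (c m))) + 4 * κ * W c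
                      + 4 * (W c * ∑ m' ∈ Finset.univ.erase m, t (c m') (c m)) from by ring,
                    Finset.mul_sum]
              _ = (∑ c : Fin M → 𝒳, 2 * (W c * (1 - t (c m) (c m))))
                  + (∑ c : Fin M → 𝒳, 4 * κ * W c)
                  + ∑ c : Fin M → 𝒳,
                      4 * ∑ m' ∈ Finset.univ.erase m, W c * t (c m') (c m) := by
                  rw [Finset.sum_add_distrib, Finset.sum_add_distrib]
              _ = 2 * (∑ c : Fin M → 𝒳, W c * (1 - t (c m) (c m)))
                  + 4 * κ * (∑ c : Fin M → 𝒳, W c)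
                  + 4 * ∑ m' ∈ Finset.univ.erase m,
                      ∑ c : Fin M → 𝒳, W c * t (c m') (c m) := by
                  rw [← Finset.mul_sum, ← Finset.mul_sum, ← Finset.mul_sum, hswap]
          rw [hsplit]
          have b1 : ∑ c : Fin M → 𝒳, W c * (1 - t (c m) (c m)) ≤ e1 := by
            rw [hWdef]
            rw [marg_one p hp1 m (fun x => 1 - t x x)]
            calc ∑ x, p x * (1 - t x x) ≤ ∑ x, p x * e1 :=
                Finset.sum_le_sum fun x _ => mul_le_mul_of_nonneg_left
                  (by have := hgentle x; rw [he1]; linarith) (hp0 x)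
              _ = e1 := by rw [← Finset.sum_mul, hp1, one_mul]
          have b2 : (∑ c : Fin M → 𝒳, W c) = 1 := marg_zero p hp1 M
          have b3 : ∑ m' ∈ Finset.univ.erase m,
              ∑ c : Fin M → 𝒳, W c * t (c m') (c m) ≤ ((M:ℝ) - 1) * κ := by
            have each : ∀ m' ∈ Finset.univ.erase m,
                ∑ c : Fin M → 𝒳, W c * t (c m') (c m) ≤ κ := by
              intro m' hm'
              rw [hWdef, marg_pair p hp1 (Finset.ne_of_mem_erase hm') t]
              exact cross
            calc ∑ m' ∈ Finset.univ.erase m, ∑ c : Fin M → 𝒳, W c * t (c m') (c m)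
                ≤ ∑ m' ∈ Finset.univ.erase m, κ := Finset.sum_le_sum each
              _ = ((M:ℝ) - 1) * κ := by
                  rw [Finset.sum_const, Finset.card_erase_of_mem (Finset.mem_univ m),
                    Finset.card_univ, Fintype.card_fin, nsmul_eq_mul]
                  congr 1
                  rw [Nat.cast_sub hM]
                  norm_num
          have hκ0 : (0:ℝ) ≤ κ := hκpos.le
          nlinarith [b1, b3]
      _ = 2 * e1 + 4 * (M:ℝ) * κ := by
          rw [Finset.sum_const, Finset.card_univ, Fintype.card_fin, nsmul_eq_mul]
          field_simp
          ring
      _ = 2 * (ε + 2 * Real.sqrt ε) + 4 * (M : ℝ) * (2 : ℝ) ^ (-(H - h)) := by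
          rw [he1, hκdef]
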